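/- For every non-negative integer k, \det_{0 \leq i,j \leq k-1}\left(\frac{2^{k-2i+j}}{(k-2i+j)!}\right) = 2^{k^2} \prod_{i=1}^{k} \frac{1}{(i)_i}, where 1/m! is interpreted as 0 for negative integers m, and (x)_i = x(x+1)\cdots(x+i-1) is the Pochhammer symbol. -/

import Mathlib

open Polynomial

noncomputable def ff (m : ℤ) : ℚ :=
  if 0 ≤ m then (2 : ℚ) ^ m.toNat / Nat.factorial m.toNat else 0

lemma ff_step (m : ℤ) : ((m : ℚ) + 1) * ff (m + 1) = 2 * ff m := by
  unfold ff
  rcases lt_trichotomy m (-1) with h | h | h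
  · rw [if_neg (by omega), if_neg (by omega)]; ring
  · subst h; norm_num
  · have h0 : (0:ℤ) ≤ m := by omega
    rw [if_pos (by omega), if_pos h0]
    have ht : (m + 1).toNat = m.toNat + 1 := by omega
    have hc : (m : ℚ) = (m.toNat : ℚ) := by
      exact_mod_cast congrArg (Int.cast : ℤ → ℚ) (Int.toNat_of_nonneg h0).symm
    rw [ht, hc, Nat.factorial_succ, pow_succ]
    have h1 : ((m.toNat : ℚ) + 1) ≠ 0 := by positivity
    have h2 : (Nat.factorial m.toNat : ℚ) ≠ 0 := by
      exact_mod_cast Nat.factorial_ne_zero _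
    push_cast
    field_simp

lemma ff_shift (t : ℕ) : ∀ m : ℤ,
    (2:ℚ) ^ t * ff m = ff (m + t) * ∏ s ∈ Finset.range t, ((m : ℚ) + 1 + s) := by
  induction t with
  | zero => simp
  | succ t ih =>
    intro m
    rw [Finset.prod_range_succ, pow_succ]
    have key := ff_step (m + t)
    have : (m : ℤ) + (t+1 : ℕ) = (m + t) + 1 := by push_cast; ring
    rw [this, mul_comm ((2:ℚ)^t) 2, mul_assoc, ih m]
    rw [show ff (m + ↑t + 1) * ((∏ x ∈ Finset.range t, ((m:ℚ) + 1 + ↑x)) * ((m:ℚ) + 1 + ↑t))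
        = ((↑(m + ↑t) + 1) * ff (m + ↑t + 1)) * ∏ x ∈ Finset.range t, ((m:ℚ) + 1 + ↑x) by
      push_cast; ring, key]
    ring

lemma fact_mul_prod (s : ℕ) : ∀ m : ℕ,
    s.factorial * ∏ t ∈ Finset.range m, (s + 1 + t) = (s + m).factorial := by
  intro m
  induction m with
  | zero => simp
  | succ m ih =>
    rw [Finset.prod_range_succ, ← mul_assoc, ih,
      show s + (m+1) = (s+m) + 1 from rfl, Nat.factorial_succ]
    ring

lemma sum_odd (k : ℕ) : ∑ i ∈ Finset.range k, (2*i+1) = k^2 := by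
  induction k with
  | zero => simp
  | succ k ih => rw [Finset.sum_range_succ, ih]; ring

lemma two_mul_prod (n : ℕ) :
    ∏ s ∈ Finset.range n, (2*((s:ℚ)+1)) = 2^n * (n.factorial : ℚ) := by
  induction n with
  | zero => simp
  | succ n ih =>
    rw [Finset.prod_range_succ, ih, Nat.factorial_succ]
    push_cast
    ring

theorem stmt14 (k : ℕ) :
    Matrix.det (fun i j : Fin k =>
      if 0 ≤ (k : ℤ) - 2*i.1 + j.1 then
        (2 : ℚ) ^ ((k : ℤ) - 2*i.1 + j.1).toNat / Nat.factorial ((k : ℤ) - 2*i.1 + j.1).toNat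
      else 0)
    = 2 ^ (k^2) * ∏ i ∈ Finset.Icc 1 k, (∏ t ∈ Finset.range i, ((i + t : ℕ) : ℚ))⁻¹ := by
  rcases Nat.eq_zero_or_pos k with hk | hk
  · subst hk
    exact Matrix.det_isEmpty.trans (by simp)
  set c : Fin k → ℚ := fun i => ff ((2*(k-1-i.1)+1 : ℕ) : ℤ) with hc
  set d : Fin k → ℚ := fun j => ((2:ℚ)^(k-1-j.1))⁻¹ with hd
  set A : Matrix (Fin k) (Fin k) ℚ :=
    Matrix.of (fun i j : Fin k =>
      ∏ s ∈ Finset.range (k-1-j.1), (((k:ℚ) - 2*i.1 + j.1) + 1 + s)) with hA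
  -- Step 1: split the matrix entries
  have hsplit : (fun i j : Fin k =>
      if 0 ≤ (k : ℤ) - 2*i.1 + j.1 then
        (2 : ℚ) ^ ((k : ℤ) - 2*i.1 + j.1).toNat / Nat.factorial ((k : ℤ) - 2*i.1 + j.1).toNat
      else 0)
      = Matrix.of (fun i j : Fin k => c i * Matrix.of (fun i j : Fin k => d j * A i j) i j) := by
    funext i j
    show ff ((k : ℤ) - 2*i.1 + j.1) = _
    simp only [Matrix.of_apply, hc, hd, hA]
    have hj : j.1 < k := j.2
    have hi : i.1 < k := i.2
    have h := ff_shift (k - 1 - j.1) ((k:ℤ) - 2*i.1 + j.1)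
    have e1 : ((k:ℤ) - 2*i.1 + j.1) + ((k-1-j.1 : ℕ):ℤ) = ((2*(k-1-i.1)+1 : ℕ) : ℤ) := by
      omega
    rw [e1] at h
    have hcast : (((k:ℤ) - 2*i.1 + j.1 : ℤ) : ℚ) = (k:ℚ) - 2*i.1 + j.1 := by push_cast; ring
    rw [hcast] at h
    have h2 : ((2:ℚ)^(k-1-j.1)) ≠ 0 := by positivity
    field_simp
    push_cast at h ⊢
    linarith [h]
  rw [hsplit, Matrix.det_mul_column c _, Matrix.det_mul_row d A]
  -- Step 2: compute det A
  have hdetA : A.det = ∏ i : Fin k, ((2:ℚ)^(k-1-i.1) * ((k-1-i.1).factorial : ℚ)) := by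
    set v : Fin k → ℚ := fun i => 2*(i.1:ℚ) + 2 - k with hv
    set p : Fin k → ℚ[X] := fun j =>
      ∏ s ∈ Finset.range j.1, (X + C ((((k-1-j.1 : ℕ)):ℚ) + 1 + s)) with hp
    have hmonic : ∀ j, (p j).Monic := by
      intro j
      exact monic_prod_of_monic _ _ (fun s _ => monic_X_add_C _)
    have hdeg : ∀ j : Fin k, (p j).natDegree = j.1 := by
      intro j
      rw [hp]
      rw [Polynomial.natDegree_prod_of_monic _ _ (fun s _ => monic_X_add_C _)]
      rw [Finset.sum_congr rfl fun s _ => Polynomial.natDegree_X_add_C _]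
      simp
    have hsub : A.submatrix Fin.revPerm Fin.revPerm
        = Matrix.of (fun i j : Fin k => (p j).eval (v i)) := by
      funext i j
      have hi : i.1 < k := i.2
      have hj : j.1 < k := j.2
      have hri : (Fin.revPerm i : Fin k).1 = k - 1 - i.1 := by
        simp [Fin.revPerm, Fin.val_rev]; omega
      have hrj : (Fin.revPerm j : Fin k).1 = k - 1 - j.1 := by
        simp [Fin.revPerm, Fin.val_rev]; omega
      simp only [Matrix.submatrix_apply, Matrix.of_apply, hA, hri, hrj]
      rw [show k - 1 - (k - 1 - j.1) = j.1 by omega]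
      rw [Polynomial.eval_prod]
      apply Finset.prod_congr rfl
      intro s _
      rw [Polynomial.eval_add, Polynomial.eval_X, Polynomial.eval_C, hv]
      have : ((k - 1 - i.1 : ℕ) : ℚ) = (k:ℚ) - 1 - i.1 := by
        rw [Nat.cast_sub (by omega : i.1 ≤ k - 1), Nat.cast_sub (by omega : 1 ≤ k)]
        norm_num
      rw [this]
      ring
    have h1 : A.det = (Matrix.vandermonde v).det := by
      rw [← Matrix.det_submatrix_equiv_self Fin.revPerm A, hsub,
        ← Matrix.det_eval_matrixOfPolynomials_eq_det_vandermonde v p hdeg hmonic]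
    rw [h1, Matrix.det_vandermonde]
    apply Finset.prod_congr rfl
    intro i _
    have inner : ∏ j ∈ Finset.Ioi i, (v j - v i)
        = ∏ s ∈ Finset.range (k - 1 - i.1), (2*((s:ℚ)+1)) := by
      apply Finset.prod_nbij' (fun j => j.1 - i.1 - 1)
        (fun s => if h : i.1 + 1 + s < k then (⟨i.1+1+s, h⟩ : Fin k) else i)
      · intro j hj
        have : i < j := Finset.mem_Ioi.mp hj
        have hij : i.1 < j.1 := this
        have := j.2
        simp only [Finset.mem_range]
        omega
      · intro s hs
        have hs' : s < k - 1 - i.1 := Finset.mem_range.mp hs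
        have h : i.1 + 1 + s < k := by omega
        rw [dif_pos h]
        exact Finset.mem_Ioi.mpr (by simp [Fin.lt_def]; omega)
      · intro j hj
        have : i < j := Finset.mem_Ioi.mp hj
        have hij : i.1 < j.1 := this
        have h : i.1 + 1 + (j.1 - i.1 - 1) < k := by omega
        rw [dif_pos h]
        apply Fin.ext
        simp
        omega
      · intro s hs
        have hs' : s < k - 1 - i.1 := Finset.mem_range.mp hs
        have h : i.1 + 1 + s < k := by omega
        rw [dif_pos h]
        simp
        omega
      · intro j hj
        have : i < j := Finset.mem_Ioi.mp hj
        have hij : i.1 < j.1 := this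
        rw [hv]
        have : ((j.1 - i.1 - 1 : ℕ) : ℚ) = (j.1:ℚ) - i.1 - 1 := by
          rw [Nat.cast_sub (by omega : 1 ≤ j.1 - i.1), Nat.cast_sub (by omega : i.1 ≤ j.1)]
          norm_num
        rw [this]
        ring
    rw [inner, two_mul_prod]
  rw [hdetA]
  -- Step 3: scalar computation
  simp only [hc, hd]
  rw [show (∏ i : Fin k, ff ((2*(k-1-i.1)+1 : ℕ) : ℤ))
      = ∏ i ∈ Finset.range k, ff ((2*(k-1-i)+1 : ℕ) : ℤ) from
    Fin.prod_univ_eq_prod_range (fun n => ff ((2*(k-1-n)+1 : ℕ) : ℤ)) k]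
  rw [show (∏ j : Fin k, ((2:ℚ)^(k-1-j.1))⁻¹)
      = ∏ j ∈ Finset.range k, ((2:ℚ)^(k-1-j))⁻¹ from
    Fin.prod_univ_eq_prod_range (fun n => ((2:ℚ)^(k-1-n))⁻¹) k]
  rw [show (∏ i : Fin k, ((2:ℚ)^(k-1-i.1) * ((k-1-i.1).factorial : ℚ)))
      = ∏ i ∈ Finset.range k, ((2:ℚ)^(k-1-i) * ((k-1-i).factorial : ℚ)) from
    Fin.prod_univ_eq_prod_range (fun n => ((2:ℚ)^(k-1-n) * ((k-1-n).factorial : ℚ))) k]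
  rw [Finset.prod_range_reflect (fun i => ff ((2*i+1 : ℕ) : ℤ)) k,
    Finset.prod_range_reflect (fun j => ((2:ℚ)^j)⁻¹) k,
    Finset.prod_range_reflect (fun i => ((2:ℚ)^i * (i.factorial : ℚ))) k]
  rw [← Finset.Ico_add_one_right_eq_Icc, Finset.prod_Ico_eq_prod_range]
  norm_num
  rw [show (2:ℚ)^(k^2) = ∏ i ∈ Finset.range k, (2:ℚ)^(2*i+1) by
    rw [Finset.prod_pow_eq_pow_sum, sum_odd]]
  rw [show ((∏ x ∈ Finset.range k, (2:ℚ)^x)⁻¹) = ∏ x ∈ Finset.range k, ((2:ℚ)^x)⁻¹ by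
    rw [← Finset.prod_inv_distrib]]
  rw [show ((∏ x ∈ Finset.range k, ∏ t ∈ Finset.range (1+x), (1+(x:ℚ)+t))⁻¹)
      = ∏ x ∈ Finset.range k, (∏ t ∈ Finset.range (1+x), (1+(x:ℚ)+t))⁻¹ by
    rw [← Finset.prod_inv_distrib]]
  rw [← Finset.prod_mul_distrib, ← Finset.prod_mul_distrib, ← Finset.prod_mul_distrib]
  apply Finset.prod_congr rfl
  intro i _
  have hff : ff (2*(i:ℤ)+1) = 2^(2*i+1) / (((2*i+1).factorial : ℕ) : ℚ) := by
    have harg : (2*(i:ℤ)+1).toNat = 2*i+1 := by omega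
    unfold ff
    rw [if_pos (by positivity), harg]
  rw [hff]
  have hprod_eq : (∏ t ∈ Finset.range (1+i), (1+(i:ℚ)+t))
      = ∏ t ∈ Finset.range (i+1), ((i+1+t : ℕ):ℚ) := by
    rw [Nat.add_comm 1 i]
    apply Finset.prod_congr rfl
    intro t _
    push_cast
    ring
  rw [hprod_eq]
  have hkey : ((i.factorial : ℚ)) * ∏ t ∈ Finset.range (i+1), ((i+1+t : ℕ) : ℚ)
      = (((2*i+1).factorial : ℚ)) := by
    have h0 := fact_mul_prod i (i+1)
    rw [show i + (i+1) = 2*i+1 by ring] at h0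
    exact_mod_cast congrArg (Nat.cast : ℕ → ℚ) h0
  have hne1 : (((2*i+1).factorial : ℚ)) ≠ 0 := by
    exact_mod_cast Nat.factorial_ne_zero _
  have hne2 : (∏ t ∈ Finset.range (i+1), ((i+1+t : ℕ) : ℚ)) ≠ 0 := by
    apply Finset.prod_ne_zero_iff.mpr
    intro t _
    positivity
  have hne3 : ((2:ℚ)^i) ≠ 0 := by positivity
  push_cast at hkey hne2 ⊢
  field_simp
  linear_combination hkey
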